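/- arXiv:2602.19309 — 2 statements merged into one kernel-verified Lean document; each statement's English description precedes it below -/
import Mathlib

section
/- Let π₂ and π₂' be two player-2 policies and let ε : {1,…,H} → ℝ≥0 be such that for every even step h ≤ H and every history τ ∈ Y^{h−1}, d_TV(π₂(h,τ), π₂'(h,τ)) ≤ ε_h. Then for every player-1 policy π₁, every odd step h ≤ H, and every history τ ∈ Y^{h−1}, the value functions satisfy |V_h^{π₁,π₂'}(τ) − V_h^{π₁,π₂}(τ)| ≤ Σ_{d=0}^{⌊(H−h−1)/2⌋} ε_{h+2d+1} (the sum of the per-step total-variation errors at the even steps h+1, h+3, … up to H). -/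
/-- Total variation distance between two probability mass functions on a finite type. -/
noncomputable def dTV {Y : Type*} [Fintype Y] (p q : Y → ℝ) : ℝ :=
  (1 / 2) * ∑ y, |p y - q y|

/-- Value function of the alternating-move finite-horizon game with horizon `H`, reward `r` on
full trajectories, player-1 policy `π₁` (moving at histories of even length, i.e. odd steps) and
player-2 policy `π₂` (moving at histories of odd length, i.e. even steps).  `gameValue H r π₁ π₂ k τ`
is the expected reward starting from the history `τ` of length `k` (i.e. at step `h = k + 1`). -/
noncomputable def gameValue {Y : Type*} [Fintype Y] (H : ℕ) (r : (Fin H → Y) → ℝ)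
    (π₁ π₂ : (k : ℕ) → (Fin k → Y) → Y → ℝ) : (k : ℕ) → (Fin k → Y) → ℝ :=
  fun k τ =>
    if hk : k < H then
      ∑ y : Y, (if Even k then π₁ k τ y else π₂ k τ y) *
        gameValue H r π₁ π₂ (k + 1) (Fin.snoc τ y)
    else r fun i => τ (Fin.castLE (Nat.le_of_not_lt hk) i)
  termination_by k => H - k

lemma gameValue_bounds {Y : Type*} [Fintype Y] (H : ℕ) (r : (Fin H → Y) → ℝ)
    (hr : ∀ τ, 0 ≤ r τ ∧ r τ ≤ 1) (p₁ p₂ : (k : ℕ) → (Fin k → Y) → Y → ℝ)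
    (hp₁ : ∀ k, Even k → ∀ τ : Fin k → Y, (∀ y, 0 ≤ p₁ k τ y) ∧ ∑ y, p₁ k τ y = 1)
    (hp₂ : ∀ k, Odd k → ∀ τ : Fin k → Y, (∀ y, 0 ≤ p₂ k τ y) ∧ ∑ y, p₂ k τ y = 1) :
    ∀ n k (τ : Fin k → Y), H - k ≤ n →
      0 ≤ gameValue H r p₁ p₂ k τ ∧ gameValue H r p₁ p₂ k τ ≤ 1 := by
  intro n
  induction n with
  | zero =>
    intro k τ hn
    have hk : ¬ k < H := by omega
    rw [gameValue]
    simp only [hk, dif_neg, not_false_iff]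
    exact hr _
  | succ n ih =>
    intro k τ hn
    by_cases hk : k < H
    · have hp : (∀ y, 0 ≤ (if Even k then p₁ k τ y else p₂ k τ y)) ∧
          (∑ y, (if Even k then p₁ k τ y else p₂ k τ y)) = 1 := by
        by_cases he : Even k
        · simpa [he] using hp₁ k he τ
        · simpa [he] using hp₂ k (Nat.not_even_iff_odd.mp he) τ
      rw [gameValue]
      simp only [hk, dif_pos]
      constructor
      · apply Finset.sum_nonneg
        intro y _
        exact mul_nonneg (hp.1 y) ((ih (k+1) (Fin.snoc τ y) (by omega)).1)
      · calc (∑ y : Y, (if Even k then p₁ k τ y else p₂ k τ y) *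
              gameValue H r p₁ p₂ (k + 1) (Fin.snoc τ y))
            ≤ ∑ y : Y, (if Even k then p₁ k τ y else p₂ k τ y) := by
              apply Finset.sum_le_sum
              intro y _
              exact mul_le_of_le_one_right (hp.1 y) ((ih (k+1) (Fin.snoc τ y) (by omega)).2)
          _ = 1 := hp.2
    · rw [gameValue]; simp only [hk, dif_neg, not_false_iff]; exact hr _

/-- Error propagation: if the two player-2 policies `π₂` and `π₂'` are `ε h`-close in total
variation at every even step `h ≤ H`, then for every player-1 policy `π₁`, every odd step
`h ≤ H` and every history `τ` of length `h − 1`, the corresponding values differ by at most the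
sum of the per-step total-variation errors at the even steps `h+1, h+3, …` up to `H`. -/
theorem value_error_propagation {Y : Type*} [Fintype Y] [Nonempty Y] (H : ℕ)
    (r : (Fin H → Y) → ℝ) (hr : ∀ τ, 0 ≤ r τ ∧ r τ ≤ 1)
    (π₁ π₂ π₂' : (k : ℕ) → (Fin k → Y) → Y → ℝ)
    (hπ₁ : ∀ k, Even k → ∀ τ : Fin k → Y, (∀ y, 0 ≤ π₁ k τ y) ∧ ∑ y, π₁ k τ y = 1)
    (hπ₂ : ∀ k, Odd k → ∀ τ : Fin k → Y, (∀ y, 0 ≤ π₂ k τ y) ∧ ∑ y, π₂ k τ y = 1)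
    (hπ₂' : ∀ k, Odd k → ∀ τ : Fin k → Y, (∀ y, 0 ≤ π₂' k τ y) ∧ ∑ y, π₂' k τ y = 1)
    (ε : ℕ → ℝ) (hε : ∀ h, 0 ≤ ε h)
    (hTV : ∀ h, 1 ≤ h → h ≤ H → Even h → ∀ τ : Fin (h - 1) → Y,
      dTV (π₂ (h - 1) τ) (π₂' (h - 1) τ) ≤ ε h)
    (h : ℕ) (hh1 : 1 ≤ h) (hhH : h ≤ H) (hodd : Odd h) (τ : Fin (h - 1) → Y) :
    |gameValue H r π₁ π₂' (h - 1) τ - gameValue H r π₁ π₂ (h - 1) τ| ≤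
      ∑ k ∈ (Finset.Icc (h + 1) H).filter (fun k => Even k), ε k := by
  have key : ∀ n k (τ : Fin k → Y), H - k ≤ n →
      |gameValue H r π₁ π₂' k τ - gameValue H r π₁ π₂ k τ| ≤
        ∑ j ∈ (Finset.Icc (k + 1) H).filter (fun j => Even j), ε j := by
    intro n
    induction n with
    | zero =>
      intro k τ hn
      have hk : ¬ k < H := by omega
      rw [gameValue, gameValue]
      simp only [hk, dif_neg, not_false_iff, sub_self, abs_zero]
      exact Finset.sum_nonneg fun j _ => hε j
    | succ n ih =>
      intro k τ hn
      by_cases hk : k < H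
      · by_cases he : Even k
        · -- player 1 moves; policies agree
          have hset : (Finset.Icc (k + 1) H).filter (fun j => Even j) =
              (Finset.Icc (k + 2) H).filter (fun j => Even j) := by
            ext j
            have hk2 : k % 2 = 0 := Nat.even_iff.mp he
            simp only [Finset.mem_filter, Finset.mem_Icc, Nat.even_iff]
            omega
          rw [gameValue, gameValue]
          simp only [hk, dif_pos, he, if_pos]
          rw [← Finset.sum_sub_distrib]
          calc |∑ y : Y, (π₁ k τ y * gameValue H r π₁ π₂' (k + 1) (Fin.snoc τ y) -
                  π₁ k τ y * gameValue H r π₁ π₂ (k + 1) (Fin.snoc τ y))|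
              ≤ ∑ y : Y, |π₁ k τ y * gameValue H r π₁ π₂' (k + 1) (Fin.snoc τ y) -
                  π₁ k τ y * gameValue H r π₁ π₂ (k + 1) (Fin.snoc τ y)| :=
                Finset.abs_sum_le_sum_abs _ _
            _ = ∑ y : Y, π₁ k τ y * |gameValue H r π₁ π₂' (k + 1) (Fin.snoc τ y) -
                  gameValue H r π₁ π₂ (k + 1) (Fin.snoc τ y)| := by
                refine Finset.sum_congr rfl fun y _ => ?_
                rw [← mul_sub, abs_mul, abs_of_nonneg ((hπ₁ k he τ).1 y)]
            _ ≤ ∑ y : Y, π₁ k τ y *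
                  (∑ j ∈ (Finset.Icc (k + 2) H).filter (fun j => Even j), ε j) := by
                apply Finset.sum_le_sum
                intro y _
                exact mul_le_mul_of_nonneg_left (ih (k+1) (Fin.snoc τ y) (by omega))
                  ((hπ₁ k he τ).1 y)
            _ = ∑ j ∈ (Finset.Icc (k + 2) H).filter (fun j => Even j), ε j := by
                rw [← Finset.sum_mul, (hπ₁ k he τ).2, one_mul]
            _ = ∑ j ∈ (Finset.Icc (k + 1) H).filter (fun j => Even j), ε j := by
                rw [hset]
        · -- player 2 moves
          have hko : Odd k := Nat.not_even_iff_odd.mp he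
          have hk2 : k % 2 = 1 := Nat.odd_iff.mp hko
          set V' : Y → ℝ := fun y => gameValue H r π₁ π₂' (k + 1) (Fin.snoc τ y) with hV'
          set V : Y → ℝ := fun y => gameValue H r π₁ π₂ (k + 1) (Fin.snoc τ y) with hV
          have hs2 : ∑ y, π₂ k τ y = 1 := (hπ₂ k hko τ).2
          have hs2' : ∑ y, π₂' k τ y = 1 := (hπ₂' k hko τ).2
          have hgv' : |gameValue H r π₁ π₂' k τ - gameValue H r π₁ π₂ k τ| =
              |(∑ y, π₂' k τ y * V' y) - ∑ y, π₂ k τ y * V y| := by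
            rw [gameValue, gameValue]
            simp only [hk, dif_pos, he, if_neg, not_false_iff]
            rfl
          have hsplit : (∑ y, π₂' k τ y * V' y) - (∑ y, π₂ k τ y * V y) =
              (∑ y, (π₂' k τ y - π₂ k τ y) * (V' y - 1/2)) +
                ∑ y, π₂ k τ y * (V' y - V y) := by
            have e1 : ∑ y, (π₂' k τ y - π₂ k τ y) * (V' y - 1/2) =
                (∑ y, π₂' k τ y * V' y) - ∑ y, π₂ k τ y * V' y := by
              simp only [sub_mul, mul_sub, Finset.sum_sub_distrib, ← Finset.sum_mul,
                hs2, hs2']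
              ring
            have e2 : ∑ y, π₂ k τ y * (V' y - V y) =
                (∑ y, π₂ k τ y * V' y) - ∑ y, π₂ k τ y * V y := by
              simp only [mul_sub, Finset.sum_sub_distrib]
            rw [e1, e2]; ring
          have hterm1 : |∑ y, (π₂' k τ y - π₂ k τ y) * (V' y - 1/2)| ≤ ε (k + 1) := by
            calc |∑ y, (π₂' k τ y - π₂ k τ y) * (V' y - 1/2)|
                ≤ ∑ y, |(π₂' k τ y - π₂ k τ y) * (V' y - 1/2)| :=
                  Finset.abs_sum_le_sum_abs _ _
              _ ≤ ∑ y, |π₂' k τ y - π₂ k τ y| * (1/2) := by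
                  apply Finset.sum_le_sum
                  intro y _
                  rw [abs_mul]
                  apply mul_le_mul_of_nonneg_left _ (abs_nonneg _)
                  have hb := gameValue_bounds H r hr π₁ π₂' hπ₁ hπ₂' (H - (k+1))
                    (k+1) (Fin.snoc τ y) le_rfl
                  rw [abs_le]
                  constructor <;> [linarith [hb.1]; linarith [hb.2]]
              _ = dTV (π₂ k τ) (π₂' k τ) := by
                  rw [dTV, Finset.mul_sum]
                  refine Finset.sum_congr rfl fun y _ => ?_
                  rw [abs_sub_comm]; ring
              _ ≤ ε (k + 1) := by
                  have := hTV (k + 1) (by omega) (by omega) (by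
                    rw [Nat.even_iff]; omega) τ
                  simpa using this
          have hterm2 : |∑ y, π₂ k τ y * (V' y - V y)| ≤
              ∑ j ∈ (Finset.Icc (k + 2) H).filter (fun j => Even j), ε j := by
            calc |∑ y, π₂ k τ y * (V' y - V y)|
                ≤ ∑ y, |π₂ k τ y * (V' y - V y)| := Finset.abs_sum_le_sum_abs _ _
              _ = ∑ y, π₂ k τ y * |V' y - V y| := by
                  refine Finset.sum_congr rfl fun y _ => ?_
                  rw [abs_mul, abs_of_nonneg ((hπ₂ k hko τ).1 y)]
              _ ≤ ∑ y, π₂ k τ y *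
                    (∑ j ∈ (Finset.Icc (k + 2) H).filter (fun j => Even j), ε j) := by
                  apply Finset.sum_le_sum
                  intro y _
                  exact mul_le_mul_of_nonneg_left (ih (k+1) (Fin.snoc τ y) (by omega))
                    ((hπ₂ k hko τ).1 y)
              _ = _ := by rw [← Finset.sum_mul, hs2, one_mul]
          have hins : (Finset.Icc (k + 1) H).filter (fun j => Even j) =
              insert (k + 1) ((Finset.Icc (k + 2) H).filter (fun j => Even j)) := by
            ext j
            simp only [Finset.mem_filter, Finset.mem_Icc, Finset.mem_insert, Nat.even_iff]
            omega
          have hnotmem : k + 1 ∉ (Finset.Icc (k + 2) H).filter (fun j => Even j) := by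
            simp only [Finset.mem_filter, Finset.mem_Icc]
            omega
          rw [hgv', hsplit, hins, Finset.sum_insert hnotmem]
          calc |(∑ y, (π₂' k τ y - π₂ k τ y) * (V' y - 1/2)) +
                  ∑ y, π₂ k τ y * (V' y - V y)|
              ≤ |∑ y, (π₂' k τ y - π₂ k τ y) * (V' y - 1/2)| +
                  |∑ y, π₂ k τ y * (V' y - V y)| := abs_add_le _ _
            _ ≤ _ := add_le_add hterm1 hterm2
      · rw [gameValue, gameValue]
        simp only [hk, dif_neg, not_false_iff, sub_self, abs_zero]
        exact Finset.sum_nonneg fun j _ => hε j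
  have hset : (Finset.Icc ((h - 1) + 1) H).filter (fun j => Even j) =
      (Finset.Icc (h + 1) H).filter (fun j => Even j) := by
    have h2 : h % 2 = 1 := Nat.odd_iff.mp hodd
    ext j
    simp only [Finset.mem_filter, Finset.mem_Icc, Nat.even_iff]
    omega
  have := key H (h - 1) τ (by omega)
  rwa [hset] at this
end

section
/- For every probability mass function π on P × M there exists a payoff function ρ : P × M → [0,1] with max_{(p,m)} ρ(p,m) = 1 such that the expected payoff under π satisfies Σ_{(p,m)} π(p,m) · ρ(p,m) ≤ (max_{(p,m)} ρ(p,m)) / |M| = 1/|M|. In particular, no single mixed strategy over proposal–message pairs achieves more than a 1/|M| fraction of the optimal achievable payoff uniformly over all such payoff functions. -/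
/-- Non-dominance: for every mixed strategy `π` over proposal–message pairs `P × M`, there is a
payoff function `ρ : P × M → [0,1]` with maximum value `1` under which `π`'s expected payoff is
at most `1/|M|`, i.e. at most a `1/|M|` fraction of the optimal achievable payoff. -/
theorem no_dominant_mixed_strategy {P M : Type*} [Fintype P] [Fintype M]
    [Nonempty P] [Nonempty M]
    (π : P × M → ℝ) (hπ0 : ∀ x, 0 ≤ π x) (hπ1 : ∑ x, π x = 1) :
    ∃ ρ : P × M → ℝ,
      (∀ x, 0 ≤ ρ x ∧ ρ x ≤ 1) ∧ (∃ x, ρ x = 1) ∧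
      ∑ x, π x * ρ x ≤ 1 / (Fintype.card M : ℝ) := by
  classical
  set g : M → ℝ := fun m => ∑ p, π (p, m) with hg
  have hsum : ∑ m, g m = 1 := by
    rw [← hπ1, Finset.sum_comm]
    simp [g, Fintype.sum_prod_type]
  obtain ⟨m₀, _, hm₀⟩ := Finset.exists_min_image Finset.univ g ⟨Classical.arbitrary M, Finset.mem_univ _⟩
  refine ⟨fun x => if x.2 = m₀ then 1 else 0, ?_, ⟨(Classical.arbitrary P, m₀), by simp⟩, ?_⟩
  · intro x; by_cases h : x.2 = m₀ <;> simp [h]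
  · have hcard : (0:ℝ) < Fintype.card M := by positivity
    have hle : (Fintype.card M : ℝ) * g m₀ ≤ 1 := by
      rw [← hsum]
      calc (Fintype.card M : ℝ) * g m₀ = ∑ _m : M, g m₀ := by
            simp [Finset.sum_const, mul_comm]
        _ ≤ ∑ m, g m := Finset.sum_le_sum fun m _ => hm₀ m (Finset.mem_univ m)
    have : ∑ x : P × M, π x * (if x.2 = m₀ then (1:ℝ) else 0) = g m₀ := by
      rw [Fintype.sum_prod_type]
      simp [g, Finset.sum_ite_eq', mul_comm]
    rw [this, le_div_iff₀ hcard, mul_comm]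
    exact hle
end
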